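/- Let X be a countable set with a well-order and let a group G act on X. Define the quasi-order |_G on monomials over X by u |_G v iff there exist σ ∈ G and a monomial w with (σu)·w = v. If the monomials a_n·b_n (n ≥ 3), where a_n and b_n are squarefree monomials with variable sets A_n = {x_{−2}, x_2, ..., x_n} and B_n = {x_{−(n−1)},...,x_{−1}, x_1, x_{n+1}} respectively, form an antichain under |_{S_∞}, then the polynomial ring k[X] over any field k contains a strictly ascending chain of S_∞-stable ideals. -/

import Mathlib

/-- The set `X` of basis wedge-monomials, identified with the finite subsets of the nonzero
integers (the index sets of the wedge monomials `x_{i₁} ∧ … ∧ x_{i_p}`). -/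
abbrev WedgeVar : Type := {s : Finset ℤ // (0 : ℤ) ∉ s}

/-- The action of a permutation `σ` of the integers fixing `0` on wedge-monomial variables,
by permuting indices. -/
def varMap (σ : Equiv.Perm ℤ) (h0 : σ 0 = 0) (s : WedgeVar) : WedgeVar :=
  ⟨s.1.image σ, by
    intro h
    obtain ⟨a, ha, hA⟩ := Finset.mem_image.mp h
    exact s.2 ((σ.injective (hA.trans h0.symm)) ▸ ha)⟩

/-- The index set of `a_n = x_{-2} ∧ x_2 ∧ … ∧ x_n` as a wedge-monomial variable. -/
noncomputable def varA (n : ℤ) : WedgeVar :=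
  ⟨insert (-2) (Finset.Icc 2 n), by simp⟩

/-- The index set of `b_n = x_{-(n-1)} ∧ … ∧ x_{-1} ∧ x_1 ∧ x_{n+1}` as a wedge-monomial
variable. -/
noncomputable def varB (n : ℤ) (hn : 3 ≤ n) : WedgeVar :=
  ⟨insert 1 (insert (n + 1) (Finset.Icc (-(n - 1)) (-1))), by
    simp only [Finset.mem_insert, Finset.mem_Icc]
    omega⟩

/-- The squarefree monomial `a_n · b_n`, as a finitely supported exponent vector. -/
noncomputable def monAB (n : ℤ) (hn : 3 ≤ n) : WedgeVar →₀ ℕ :=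
  Finsupp.single (varA n) 1 + Finsupp.single (varB n hn) 1

/-- The quasi-order `u |_{S_∞} v`: there are `σ ∈ S_∞` (a finitely supported permutation of
the nonzero integers) and a monomial `w` with `(σ u) · w = v`. -/
def MonDvd (u v : WedgeVar →₀ ℕ) : Prop :=
  ∃ σ : Equiv.Perm ℤ, ∃ h0 : σ 0 = 0, {z : ℤ | σ z ≠ z}.Finite ∧
    ∃ w : WedgeVar →₀ ℕ, Finsupp.mapDomain (varMap σ h0) u + w = v

/-- Aschenbrenner–Hillar style implication used in Proposition 3.1 of the paper: if the
monomials `a_n · b_n` (`n ≥ 3`) form an antichain under `|_{S_∞}`, then the polynomial ring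
`k[X]` on the wedge-monomial variables over any field `k` contains a strictly ascending chain
of `S_∞`-stable ideals. -/
lemma varMap_comp (σ τ : Equiv.Perm ℤ) (hσ : σ 0 = 0) (hτ : τ 0 = 0) (s : WedgeVar) :
    varMap σ hσ (varMap τ hτ s) = varMap (τ.trans σ) (by simp [hτ, hσ]) s := by
  apply Subtype.ext
  simp [varMap, Finset.image_image, Function.comp]

lemma varMap_refl : varMap (Equiv.refl ℤ) rfl = id := by
  funext s
  apply Subtype.ext
  simp [varMap]

/-- Generators of the `i`-th ideal: the `S_∞`-orbits of `monAB n` for `3 ≤ n ≤ 3 + i`. -/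
def genSet (i : ℕ) : Set (WedgeVar →₀ ℕ) :=
  { v | ∃ (n : ℤ) (hn : 3 ≤ n) (σ : Equiv.Perm ℤ) (h0 : σ 0 = 0),
      {z : ℤ | σ z ≠ z}.Finite ∧ n ≤ 3 + (i : ℤ) ∧
      v = Finsupp.mapDomain (varMap σ h0) (monAB n hn) }

theorem stmt_18 (k : Type*) [Field k]
    (h : ∀ (n m : ℤ) (hn : 3 ≤ n) (hm : 3 ≤ m), n ≠ m →
      ¬ MonDvd (monAB n hn) (monAB m hm)) :
    ∃ J : ℕ → Ideal (MvPolynomial WedgeVar k), StrictMono J ∧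
      ∀ (i : ℕ) (σ : Equiv.Perm ℤ) (h0 : σ 0 = 0), {z : ℤ | σ z ≠ z}.Finite →
        ∀ f ∈ J i, MvPolynomial.rename (varMap σ h0) f ∈ J i := by
  classical
  refine ⟨fun i => Ideal.span ((fun s => MvPolynomial.monomial s (1 : k)) '' genSet i),
    ?_, ?_⟩
  · -- strict monotonicity
    apply strictMono_nat_of_lt_succ
    intro i
    have hle : Ideal.span ((fun s => MvPolynomial.monomial s (1 : k)) '' genSet i) ≤
        Ideal.span ((fun s => MvPolynomial.monomial s (1 : k)) '' genSet (i + 1)) := by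
      apply Ideal.span_mono
      apply Set.image_mono
      rintro v ⟨n, hn, σ, h0, hfin, hn2, rfl⟩
      exact ⟨n, hn, σ, h0, hfin, by push_cast; omega, rfl⟩
    refine lt_of_le_of_ne hle fun heq => ?_
    have hn4 : (3 : ℤ) ≤ 4 + (i : ℤ) := by omega
    -- the new monomial is in `J (i+1)` …
    have hmem : MvPolynomial.monomial (monAB (4 + (i : ℤ)) hn4) (1 : k) ∈
        Ideal.span ((fun s => MvPolynomial.monomial s (1 : k)) '' genSet (i + 1)) := by
      apply Ideal.subset_span
      refine ⟨monAB (4 + (i : ℤ)) hn4, ⟨4 + (i : ℤ), hn4, Equiv.refl ℤ, rfl,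
        ?_, by push_cast; omega, ?_⟩, rfl⟩
      · simp only [Equiv.refl_apply, ne_eq, not_true_eq_false, Set.setOf_false]; exact Set.finite_empty
      · rw [varMap_refl, Finsupp.mapDomain_id]
    -- … but not in `J i`.
    rw [← heq, MvPolynomial.mem_ideal_span_monomial_image] at hmem
    have hsupp : monAB (4 + (i : ℤ)) hn4 ∈
        (MvPolynomial.monomial (monAB (4 + (i : ℤ)) hn4) (1 : k)).support := by
      rw [MvPolynomial.support_monomial, if_neg one_ne_zero]
      exact Finset.mem_singleton_self _
    obtain ⟨si, ⟨n, hn, σ, h0, hfin, hn2, rfl⟩, hsile⟩ := hmem _ hsupp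
    obtain ⟨w, hw⟩ := le_iff_exists_add.mp hsile
    exact h n (4 + (i : ℤ)) hn hn4 (by omega)
      ⟨σ, h0, hfin, w, hw.symm⟩
  · -- equivariance
    intro i σ h0 hfin f hf
    have : MvPolynomial.rename (varMap σ h0) f ∈
        Ideal.map (MvPolynomial.rename (varMap σ h0) :
            MvPolynomial WedgeVar k →ₐ[k] MvPolynomial WedgeVar k).toRingHom
          (Ideal.span ((fun s => MvPolynomial.monomial s (1 : k)) '' genSet i)) :=
      Ideal.mem_map_of_mem _ hf
    rw [Ideal.map_span] at this
    refine Ideal.span_le.mpr ?_ this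
    rintro _ ⟨_, ⟨v, ⟨n, hn, τ, hτ0, hτfin, hn2, rfl⟩, rfl⟩, rfl⟩
    apply Ideal.subset_span
    refine ⟨Finsupp.mapDomain (varMap σ h0) (Finsupp.mapDomain (varMap τ hτ0) (monAB n hn)),
      ⟨n, hn, τ.trans σ, by simp [hτ0, h0], ?_, hn2, ?_⟩, ?_⟩
    · refine Set.Finite.subset (hτfin.union hfin) ?_
      intro z hz
      by_contra hc
      simp only [Set.mem_union, Set.mem_setOf_eq, not_or, not_not] at hc
      exact hz (by simp [Equiv.trans_apply, hc.1, hc.2])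
    · rw [← Finsupp.mapDomain_comp]
      congr 1
      funext s
      exact varMap_comp σ τ h0 hτ0 s
    · simp [MvPolynomial.rename_monomial]
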